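/- Let k be a field, a ∈ k[[x,y]] nonzero with order d, and suppose a = x^ℓ·(g(y) + x·Ω(x,y)) where g ∈ k[y] is nonzero of order M = ord_0(g) (the minimal exponent with nonzero coefficient) and Ω ∈ k[[x,y]]. Then the polynomial obtained by substituting X = 1 in the initial form In(a) = Σ_{i+j=d} λ_{i,j} X^i Y^j, namely g̃(Y) = Σ_{i+j=d} λ_{i,j} Y^j, has degree at most M. -/

import Mathlib

open MvPowerSeries

/-- Let `a = x^ℓ (g(y) + x Ω) ∈ k[[x,y]]` be nonzero of order `d`, where `g` is a nonzero
series in `y` alone of order `M`.  Then the dehomogenization at `X = 1` of the initial form of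
`a` has degree at most `M`; i.e. every monomial `x^i y^j` with `i + j = d` appearing in `a`
satisfies `j ≤ M`. -/
theorem stmt_7 {k : Type*} [Field k] (a G Ω : MvPowerSeries (Fin 2) k)
    (ℓ M d : ℕ)
    (ha : a ≠ 0)
    -- `G` is a series in the variable `y` alone:
    (hGy : ∀ m : Fin 2 →₀ ℕ, MvPowerSeries.coeff m G ≠ 0 → m 0 = 0)
    -- `G` has order `M` in `y`:
    (hGM : MvPowerSeries.coeff (Finsupp.single 1 M) G ≠ 0)
    (hGlt : ∀ j < M, MvPowerSeries.coeff (Finsupp.single 1 j) G = 0)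
    -- the factorization `a = x^ℓ (G + x Ω)`:
    (hfac : a = (MvPowerSeries.X 0) ^ ℓ * (G + MvPowerSeries.X 0 * Ω))
    -- `d` is the order of `a` (minimal total degree):
    (hd_le : ∀ m : Fin 2 →₀ ℕ, MvPowerSeries.coeff m a ≠ 0 → d ≤ m 0 + m 1)
    (hd_ex : ∃ m : Fin 2 →₀ ℕ, MvPowerSeries.coeff m a ≠ 0 ∧ m 0 + m 1 = d) :
    ∀ m : Fin 2 →₀ ℕ, MvPowerSeries.coeff m a ≠ 0 → m 0 + m 1 = d → m 1 ≤ M := by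
  classical
  --`coeff a (ℓ, M) = coeff G (0, M) ≠ 0`, hence `d ≤ ℓ + M`.
  have key : MvPowerSeries.coeff (Finsupp.single 0 ℓ + Finsupp.single 1 M) a
      = MvPowerSeries.coeff (Finsupp.single 1 M) G := by
    rw [hfac, X_pow_eq, coeff_add_monomial_mul, one_mul, map_add]
    have h0 : MvPowerSeries.coeff (Finsupp.single 1 M) (MvPowerSeries.X 0 * Ω) = 0 := by
      rw [show (MvPowerSeries.X 0 : MvPowerSeries (Fin 2) k) = monomial (Finsupp.single 0 1) 1
        from rfl, coeff_monomial_mul, if_neg]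
      intro h
      have := h 0
      simp at this
    rw [h0, add_zero]
  have hdle : d ≤ ℓ + M := by
    have := hd_le _ (key ▸ hGM)
    simpa using this
  intro m hm hmd
  -- coeff of a at m is nonzero, so ℓ ≤ m 0
  have hℓ : ℓ ≤ m 0 := by
    by_contra hc
    apply hm
    rw [hfac, X_pow_eq, coeff_monomial_mul, if_neg]
    intro h
    exact hc (by simpa using h 0)
  omega
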